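/- Let A be a unital C*-algebra, φ a positive tracial linear functional on A, and p ≥ 1 a real number. Then for every x ∈ A, φ(|x*|^p) = φ(|x|^p), i.e. φ((x x*)^{p/2}) = φ((x* x)^{p/2}). -/

import Mathlib

open ComplexOrder

open scoped NNReal Polynomial

/-- Let `A` be a unital C*-algebra, `φ` a positive tracial linear
functional on `A`, and `p ≥ 1` a real number.  Then for every `x ∈ A`,
`φ(|x*|^p) = φ(|x|^p)`, i.e. `φ((x x*)^{p/2}) = φ((x* x)^{p/2})`, the powers being
taken via the continuous functional calculus. -/
theorem statement5 {A : Type*} [CStarAlgebra A] [PartialOrder A] [StarOrderedRing A]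
    (φ : A →ₗ[ℂ] ℂ)
    (hφpos : ∀ a : A, 0 ≤ φ (star a * a))
    (hφtr : ∀ a b : A, φ (a * b) = φ (b * a))
    (p : ℝ) (hp : 1 ≤ p) :
    ∀ x : A, φ (CFC.rpow (x * star x) (p / 2)) = φ (CFC.rpow (star x * x) (p / 2)) := by
  rcases subsingleton_or_nontrivial A with hA | hA
  · intro x
    congr 1
    exact Subsingleton.elim _ _
  intro x
  set r : ℝ := p / 2 with hr_def
  have hr : 0 < r := by positivity
  set a : A := x * star x with ha_def
  set b : A := star x * x with hb_def
  have ha : 0 ≤ a := mul_star_self_nonneg x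
  have hb : 0 ≤ b := star_mul_self_nonneg x
  -- positivity of φ on nonneg elements
  have hpos : ∀ c : A, 0 ≤ c → 0 ≤ φ c := by
    intro c hc
    have h1 := hφpos (CFC.sqrt c)
    rwa [(IsSelfAdjoint.of_nonneg (CFC.sqrt_nonneg (a := c))).star_eq,
      CFC.sqrt_mul_sqrt_self c hc] at h1
  have hmono : ∀ c d : A, c ≤ d → φ c ≤ φ d := by
    intro c d h
    have := hpos (d - c) (sub_nonneg.mpr h)
    rw [map_sub] at this
    exact sub_nonneg.mp this
  have h1 : (0 : ℂ) ≤ φ 1 := by simpa using hφpos 1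
  obtain ⟨hC, him⟩ := Complex.nonneg_iff.mp h1
  set C : ℝ := (φ 1).re with hC_def
  -- φ is bounded on selfadjoint elements
  have hbound : ∀ d : A, IsSelfAdjoint d → ‖φ d‖ ≤ ‖d‖ * C := by
    intro d hd
    have hle : φ d ≤ φ (algebraMap ℝ A ‖d‖) := hmono _ _ hd.le_algebraMap_norm_self
    have hge : φ (-(algebraMap ℝ A ‖d‖)) ≤ φ d := hmono _ _ hd.neg_algebraMap_norm_le_self
    have heval : φ (algebraMap ℝ A ‖d‖) = (‖d‖ : ℂ) * φ 1 := by
      rw [Algebra.algebraMap_eq_smul_one, LinearMap.map_smul_of_tower]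
      simp [Complex.real_smul]
    rw [heval] at hle
    rw [map_neg, heval] at hge
    have hre1 : ((‖d‖ : ℂ) * φ 1).re = ‖d‖ * C := by
      simp [Complex.mul_re, ← him, hC_def]
    have him1 : ((‖d‖ : ℂ) * φ 1).im = 0 := by
      simp [Complex.mul_im, ← him]
    rw [Complex.le_def] at hle hge
    have himd : (φ d).im = 0 := hle.2.trans him1
    have : φ d = (((φ d).re : ℝ) : ℂ) := Complex.ext rfl (by simp [himd])
    rw [this, Complex.norm_real, Real.norm_eq_abs]
    apply abs_le.mpr
    constructor
    · have := hge.1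
      rw [Complex.neg_re, hre1] at this
      linarith
    · have := hle.1
      rw [hre1] at this
      linarith
  -- the trace property for powers
  have hab : ∀ n : ℕ, a ^ (n + 1) = x * b ^ n * star x := by
    intro n
    induction n with
    | zero => simp [ha_def]
    | succ n ih =>
      rw [pow_succ, ih]
      calc x * b ^ n * star x * a = x * b ^ n * (star x * (x * star x)) := by
            simp [ha_def, mul_assoc]
        _ = x * (b ^ n * b) * star x := by simp [hb_def, mul_assoc]
        _ = x * b ^ (n + 1) * star x := by rw [← pow_succ]
  have hn : ∀ n : ℕ, φ (a ^ n) = φ (b ^ n) := by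
    intro n
    cases n with
    | zero => simp
    | succ n =>
      rw [hab n, mul_assoc, hφtr x (b ^ n * star x), mul_assoc, ← hb_def, ← pow_succ]
  -- the trace property for polynomials
  have hkey : ∀ q : ℝ[X], φ ((Polynomial.aeval a) q) = φ ((Polynomial.aeval b) q) := by
    intro q
    induction q using Polynomial.induction_on with
    | C c => simp
    | add q₁ q₂ hq₁ hq₂ => simp [map_add, hq₁, hq₂]
    | monomial n c _ =>
      simp only [map_mul, Polynomial.aeval_C, map_pow, Polynomial.aeval_X]
      rw [← Algebra.smul_def, ← Algebra.smul_def, LinearMap.map_smul_of_tower,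
        LinearMap.map_smul_of_tower, hn (n + 1)]
  -- express CFC.rpow via the real CFC
  set f : ℝ → ℝ := fun t => ((t.toNNReal ^ r : ℝ≥0) : ℝ) with hf_def
  have hf : Continuous f :=
    NNReal.continuous_coe.comp ((NNReal.continuous_rpow_const hr.le).comp
      continuous_real_toNNReal)
  have hfa : CFC.rpow a r = cfc f a := by
    rw [CFC.rpow, cfc_nnreal_eq_real _ a ha]
  have hfb : CFC.rpow b r = cfc f b := by
    rw [CFC.rpow, cfc_nnreal_eq_real _ b hb]
  set M : ℝ := max ‖a‖ ‖b‖ with hM_def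
  have hspec : ∀ c : A, 0 ≤ c → ‖c‖ ≤ M → spectrum ℝ c ⊆ Set.Icc 0 M := by
    intro c hc hcM t ht
    refine ⟨spectrum_nonneg_of_nonneg hc ht, ?_⟩
    calc t ≤ |t| := le_abs_self t
      _ = ‖t‖ := rfl
      _ ≤ ‖c‖ := spectrum.norm_le_norm_of_mem ht
      _ ≤ M := hcM
  have hspa : spectrum ℝ a ⊆ Set.Icc 0 M := hspec a ha (le_max_left _ _)
  have hspb : spectrum ℝ b ⊆ Set.Icc 0 M := hspec b hb (le_max_right _ _)
  -- approximation bound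
  have happrox : ∀ ε : ℝ, 0 < ε → ‖φ (cfc f a) - φ (cfc f b)‖ ≤ ε * (2 * C) := by
    intro ε hε
    obtain ⟨q, hq⟩ := exists_polynomial_near_of_continuousOn 0 M f hf.continuousOn ε hε
    have hqbound : ∀ c : A, 0 ≤ c → spectrum ℝ c ⊆ Set.Icc 0 M →
        ‖φ (cfc f c) - φ ((Polynomial.aeval c) q)‖ ≤ ε * C := by
      intro c hc hsp
      have hsa : IsSelfAdjoint c := IsSelfAdjoint.of_nonneg hc
      have hdiff : cfc f c - (Polynomial.aeval c) q = cfc (fun t => f t - q.eval t) c := by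
        rw [← cfc_polynomial q c, cfc_sub f q.eval c hf.continuousOn]
      have hd1 : IsSelfAdjoint (cfc (fun t => f t - q.eval t) c) := cfc_predicate _ c
      have hd2 : ‖cfc (fun t => f t - q.eval t) c‖ ≤ ε := by
        apply norm_cfc_le hε.le
        intro t ht
        rw [Real.norm_eq_abs, abs_sub_comm]
        exact (hq t (hsp ht)).le
      calc ‖φ (cfc f c) - φ ((Polynomial.aeval c) q)‖
          = ‖φ (cfc f c - (Polynomial.aeval c) q)‖ := by rw [map_sub]
        _ = ‖φ (cfc (fun t => f t - q.eval t) c)‖ := by rw [hdiff]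
        _ ≤ ‖cfc (fun t => f t - q.eval t) c‖ * C := hbound _ hd1
        _ ≤ ε * C := by
            apply mul_le_mul_of_nonneg_right hd2 hC
    calc ‖φ (cfc f a) - φ (cfc f b)‖
        = ‖(φ (cfc f a) - φ ((Polynomial.aeval a) q))
            + (φ ((Polynomial.aeval b) q) - φ (cfc f b))‖ := by
          rw [hkey q]; ring_nf
      _ ≤ ‖φ (cfc f a) - φ ((Polynomial.aeval a) q)‖
            + ‖φ ((Polynomial.aeval b) q) - φ (cfc f b)‖ := norm_add_le _ _
      _ ≤ ε * C + ε * C := by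
          refine add_le_add (hqbound a ha hspa) ?_
          rw [norm_sub_rev]
          exact hqbound b hb hspb
      _ = ε * (2 * C) := by ring
  -- conclude
  have hzero : φ (cfc f a) = φ (cfc f b) := by
    by_contra h
    have hD : 0 < ‖φ (cfc f a) - φ (cfc f b)‖ := by
      rw [norm_pos_iff]
      exact sub_ne_zero.mpr h
    set D := ‖φ (cfc f a) - φ (cfc f b)‖
    have hε : 0 < D / (2 * C + 1) := by positivity
    have := happrox _ hε
    have h2 : D / (2 * C + 1) * (2 * C) < D := by
      rw [div_mul_eq_mul_div, div_lt_iff₀ (by positivity)]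
      nlinarith
    linarith
  rw [hfa, hfb]; exact hzero
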